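/- For every nonzero integer k and all y, z ∈ [0,1], the Green's function G_k satisfies 0 ≤ G_k(y,z) ≤ 1/(2|k|) · e^{−|k|·|y−z|}. -/

import Mathlib

noncomputable def GreenG (k : ℤ) (y z : ℝ) : ℝ :=
  if y ≤ z then Real.sinh ((k : ℝ) * (1 - z)) * Real.sinh ((k : ℝ) * y) / ((k : ℝ) * Real.sinh (k : ℝ))
  else Real.sinh ((k : ℝ) * z) * Real.sinh ((k : ℝ) * (1 - y)) / ((k : ℝ) * Real.sinh (k : ℝ))

lemma green_key (c u v : ℝ) (hc : 0 < c) (hu : 0 ≤ u) (hv : 0 ≤ v) (huv : u + v ≤ c) :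
    Real.sinh u * Real.sinh v ≤ Real.sinh c * Real.exp (u + v - c) / 2 := by
  have h1 : 2 * (Real.sinh u * Real.sinh v) = Real.cosh (u + v) - Real.cosh (u - v) := by
    rw [Real.cosh_add, Real.cosh_sub]; ring
  have h2 : 1 ≤ Real.cosh (u - v) := Real.one_le_cosh _
  have h3 : Real.cosh (u + v) = (Real.exp (u + v) + Real.exp (-(u + v))) / 2 := Real.cosh_eq _
  have h4 : Real.sinh c = (Real.exp c - Real.exp (-c)) / 2 := Real.sinh_eq _
  have h5 : Real.exp (-(u + v)) ≤ 1 := Real.exp_le_one_iff.mpr (by linarith)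
  have h6 : Real.exp (u + v - c) * Real.exp c = Real.exp (u + v) := by
    rw [← Real.exp_add]; ring_nf
  have h7 : Real.exp (u + v - c) * Real.exp (-c) = Real.exp (u + v - 2 * c) := by
    rw [← Real.exp_add]; ring_nf
  have h8 : Real.exp (u + v - 2 * c) ≤ 1 := Real.exp_le_one_iff.mpr (by linarith)
  have h9 : Real.sinh c * Real.exp (u + v - c)
      = (Real.exp (u + v) - Real.exp (u + v - 2 * c)) / 2 := by
    rw [h4, ← h6, ← h7]; ring
  linarith

lemma frac_abs (a x w : ℝ) :
    Real.sinh (a * x) * Real.sinh (a * w) / (a * Real.sinh a) =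
      Real.sinh (|a| * x) * Real.sinh (|a| * w) / (|a| * Real.sinh |a|) := by
  rcases abs_cases a with ⟨h, _⟩ | ⟨h, _⟩
  · rw [h]
  · rw [h]; simp [neg_mul, Real.sinh_neg, neg_neg]

theorem green_pointwise_bound (k : ℤ) (hk : k ≠ 0) (y z : ℝ)
    (hy : y ∈ Set.Icc (0 : ℝ) 1) (hz : z ∈ Set.Icc (0 : ℝ) 1) :
    0 ≤ GreenG k y z ∧
      GreenG k y z ≤ 1 / (2 * |(k : ℝ)|) * Real.exp (-(|(k : ℝ)| * |y - z|)) := by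
  obtain ⟨hy0, hy1⟩ := hy
  obtain ⟨hz0, hz1⟩ := hz
  set c : ℝ := |(k : ℝ)| with hcdef
  have hkc : (k : ℝ) ≠ 0 := Int.cast_ne_zero.mpr hk
  have hc : 0 < c := abs_pos.mpr hkc
  have hsc : 0 < Real.sinh c := Real.sinh_pos_iff.mpr hc
  have hden : 0 < c * Real.sinh c := mul_pos hc hsc
  by_cases hyz : y ≤ z
  · have hG : GreenG k y z = Real.sinh (c * (1 - z)) * Real.sinh (c * y) / (c * Real.sinh c) := by
      unfold GreenG
      rw [if_pos hyz, frac_abs]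
    have hu : (0:ℝ) ≤ c * (1 - z) := mul_nonneg hc.le (by linarith)
    have hv : (0:ℝ) ≤ c * y := mul_nonneg hc.le hy0
    have huv : c * (1 - z) + c * y ≤ c := by nlinarith
    have key := green_key c (c * (1 - z)) (c * y) hc hu hv huv
    have habs : |y - z| = z - y := by rw [abs_sub_comm]; exact abs_of_nonneg (by linarith)
    constructor
    · rw [hG]
      exact div_nonneg (mul_nonneg (Real.sinh_nonneg_iff.mpr hu) (Real.sinh_nonneg_iff.mpr hv)) hden.le
    · rw [hG, habs, div_le_iff₀ hden]
      have he : c * (1 - z) + c * y - c = -(c * (z - y)) := by ring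
      rw [he] at key
      have hexp : 0 < Real.exp (-(c * (z - y))) := Real.exp_pos _
      have : 1 / (2 * c) * Real.exp (-(c * (z - y))) * (c * Real.sinh c)
          = Real.sinh c * Real.exp (-(c * (z - y))) / 2 := by
        field_simp
      rw [this]; exact key
  · push_neg at hyz
    have hG : GreenG k y z = Real.sinh (c * z) * Real.sinh (c * (1 - y)) / (c * Real.sinh c) := by
      unfold GreenG
      rw [if_neg (not_le.mpr hyz), frac_abs]
    have hu : (0:ℝ) ≤ c * z := mul_nonneg hc.le hz0
    have hv : (0:ℝ) ≤ c * (1 - y) := mul_nonneg hc.le (by linarith)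
    have huv : c * z + c * (1 - y) ≤ c := by nlinarith
    have key := green_key c (c * z) (c * (1 - y)) hc hu hv huv
    have habs : |y - z| = y - z := abs_of_nonneg (by linarith)
    constructor
    · rw [hG]
      exact div_nonneg (mul_nonneg (Real.sinh_nonneg_iff.mpr hu) (Real.sinh_nonneg_iff.mpr hv)) hden.le
    · rw [hG, habs, div_le_iff₀ hden]
      have he : c * z + c * (1 - y) - c = -(c * (y - z)) := by ring
      rw [he] at key
      have : 1 / (2 * c) * Real.exp (-(c * (y - z))) * (c * Real.sinh c)
          = Real.sinh c * Real.exp (-(c * (y - z))) / 2 := by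
        field_simp
      rw [this]; exact key
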